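/- Let A ∈ ℝ^{n×n} be stable, let N ∈ ℝ^{n×r}, let U ⊆ ℝ^{r×r} be an open set every element of which is stable, and let Φ : U → ℝ^{n×r} be a function satisfying A Φ(M) + Φ(M) Mᵀ + N = 0 for every M ∈ U. Then for every A_r ∈ U, Φ is Fréchet differentiable at A_r, and for every direction ξ ∈ ℝ^{r×r} the derivative DΦ(A_r)[ξ] is the unique matrix X' ∈ ℝ^{n×r} satisfying A X' + X' A_rᵀ + Φ(A_r) ξᵀ = 0. -/

import Mathlib

open Matrix

attribute [local instance] Matrix.normedAddCommGroup Matrix.normedSpace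

/-- A square real matrix is stable if every eigenvalue (as a complex matrix)
has negative real part. -/
def IsStable {r : ℕ} (A : Matrix (Fin r) (Fin r) ℝ) : Prop :=
  ∀ μ ∈ spectrum ℂ (A.map Complex.ofReal), μ.re < 0

open Polynomial in
lemma alg_scalar {r : ℕ} (μ : ℂ) :
    algebraMap ℂ (Matrix (Fin r) (Fin r) ℂ) μ = Matrix.scalar (Fin r) μ := by
  ext i j; simp [Matrix.algebraMap_matrix_apply, Matrix.one_apply, Matrix.diagonal]

open Polynomial in
lemma root_mem_spectrum {r : ℕ} (B : Matrix (Fin r) (Fin r) ℂ) (μ : ℂ)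
    (h : B.charpoly.eval μ = 0) : μ ∈ spectrum ℂ B := by
  rw [spectrum.mem_iff]
  intro hu
  rw [Matrix.charpoly, _root_.eval_det, Matrix.matPolyEquiv_charmatrix] at h
  simp only [eval_sub, eval_X, eval_C] at h
  rw [alg_scalar, Matrix.isUnit_iff_isUnit_det, isUnit_iff_ne_zero] at hu
  exact hu h

lemma spectrum_transpose {r : ℕ} (B : Matrix (Fin r) (Fin r) ℂ) :
    spectrum ℂ Bᵀ = spectrum ℂ B := by
  ext μ
  simp only [spectrum.mem_iff]
  rw [not_iff_not, Matrix.isUnit_iff_isUnit_det, Matrix.isUnit_iff_isUnit_det,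
    ← Matrix.det_transpose (algebraMap ℂ _ μ - B)]
  congr! 2
  rw [Matrix.transpose_sub]
  congr 1
  ext i j
  simp [Matrix.algebraMap_matrix_apply, eq_comm]

lemma semiconj_pow {n r : ℕ} {A : Matrix (Fin n) (Fin n) ℂ} {B : Matrix (Fin r) (Fin r) ℂ}
    {X : Matrix (Fin n) (Fin r) ℂ} (h : A * X = X * B) (k : ℕ) :
    A ^ k * X = X * B ^ k := by
  induction k with
  | zero => simp
  | succ k ih => rw [pow_succ, pow_succ, Matrix.mul_assoc, h, ← Matrix.mul_assoc, ih,
      Matrix.mul_assoc]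

open Polynomial in
lemma semiconj_aeval {n r : ℕ} {A : Matrix (Fin n) (Fin n) ℂ} {B : Matrix (Fin r) (Fin r) ℂ}
    {X : Matrix (Fin n) (Fin r) ℂ} (h : A * X = X * B) (p : ℂ[X]) :
    (aeval A p) * X = X * (aeval B p) := by
  induction p using Polynomial.induction_on' with
  | add p q hp hq => simp [Matrix.add_mul, Matrix.mul_add, hp, hq]
  | monomial k c =>
    rw [aeval_monomial, aeval_monomial, Algebra.algebraMap_eq_smul_one,
      Algebra.algebraMap_eq_smul_one, smul_mul_assoc, smul_mul_assoc, one_mul, one_mul,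
      Matrix.smul_mul, semiconj_pow h k, Matrix.mul_smul]

open Polynomial in
lemma sylvester_injective {n r : ℕ} {A : Matrix (Fin n) (Fin n) ℝ} (hA : IsStable A)
    {M : Matrix (Fin r) (Fin r) ℝ} (hM : IsStable M)
    (X : Matrix (Fin n) (Fin r) ℝ) (hX : A * X + X * Mᵀ = 0) : X = 0 := by
  rcases Nat.eq_zero_or_pos r with hr | hr
  · subst hr; ext i j; exact j.elim0
  set Ac : Matrix (Fin n) (Fin n) ℂ := A.map Complex.ofReal with hAc
  set Mc : Matrix (Fin r) (Fin r) ℂ := M.map Complex.ofReal with hMc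
  set Xc : Matrix (Fin n) (Fin r) ℂ := X.map Complex.ofReal with hXc
  have hmap : Ac * Xc = Xc * (-Mcᵀ) := by
    have h1 : A * X = X * (-Mᵀ) := by
      rw [Matrix.mul_neg]
      exact eq_neg_of_add_eq_zero_left hX
    have h2 := congrArg (fun Y => Y.map (Complex.ofRealHom : ℝ →+* ℂ)) h1
    simp only [Matrix.map_mul] at h2
    rw [hAc, hMc, hXc]
    convert h2 using 2 <;> ext i j <;>
      simp [Matrix.transpose_apply, Matrix.map_apply]
  set B : Matrix (Fin r) (Fin r) ℂ := -Mcᵀ with hB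
  set p : ℂ[X] := B.charpoly with hp
  have h0 : (aeval Ac p) * Xc = 0 := by
    rw [semiconj_aeval hmap, Matrix.aeval_self_charpoly, Matrix.mul_zero]
  have hdeg : 0 < p.degree := by
    rw [hp, Matrix.charpoly_degree_eq_dim, Fintype.card_fin]
    exact_mod_cast hr
  have hunit : IsUnit (aeval Ac p) := by
    by_contra hnu
    have h0m : (0 : ℂ) ∈ spectrum ℂ (aeval Ac p) := (spectrum.zero_mem_iff ℂ).mpr hnu
    rw [spectrum.map_polynomial_aeval_of_degree_pos Ac p hdeg] at h0m
    obtain ⟨μ, hμ, hμ0⟩ := h0m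
    have hmem : μ ∈ spectrum ℂ B := root_mem_spectrum B μ hμ0
    rw [hB, ← spectrum.neg_eq, Set.mem_neg, spectrum_transpose] at hmem
    have := hM _ hmem
    have := hA _ hμ
    simp only [Complex.neg_re] at *
    linarith
  obtain ⟨u, hu⟩ := hunit
  have hXc0 : Xc = 0 := by
    calc Xc = ((↑u⁻¹ : Matrix (Fin n) (Fin n) ℂ) * (↑u : Matrix (Fin n) (Fin n) ℂ)) * Xc := by rw [Units.inv_mul, Matrix.one_mul]
    _ = (↑u⁻¹ : Matrix (Fin n) (Fin n) ℂ) * ((aeval Ac p) * Xc) := by rw [Matrix.mul_assoc, hu]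
    _ = 0 := by rw [h0, Matrix.mul_zero]
  ext i j
  have := congrFun (congrFun hXc0 i) j
  simpa [hXc, Complex.ofReal_eq_zero] using this

/-- The topology of real matrices, taken from the local norm. -/
@[reducible] def sylMatTopology {m k : ℕ} : TopologicalSpace (Matrix (Fin m) (Fin k) ℝ) :=
  (Matrix.normedAddCommGroup : NormedAddCommGroup (Matrix (Fin m) (Fin k) ℝ)).toUniformSpace.toTopologicalSpace

section

attribute [local instance] sylMatTopology

/-- The Sylvester linear operator `X ↦ A X + X Mᵀ`. -/
def sylL {n r : ℕ} (A : Matrix (Fin n) (Fin n) ℝ) (M : Matrix (Fin r) (Fin r) ℝ) :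
    Matrix (Fin n) (Fin r) ℝ →ₗ[ℝ] Matrix (Fin n) (Fin r) ℝ where
  toFun X := A * X + X * Mᵀ
  map_add' X Y := by
    simp only [Matrix.mul_add, Matrix.add_mul]
    abel
  map_smul' c X := by
    simp [Matrix.mul_smul, Matrix.smul_mul, smul_add]

noncomputable def sylCLM {n r : ℕ} (A : Matrix (Fin n) (Fin n) ℝ)
    (M : Matrix (Fin r) (Fin r) ℝ) :
    Matrix (Fin n) (Fin r) ℝ →L[ℝ] Matrix (Fin n) (Fin r) ℝ :=
  LinearMap.toContinuousLinearMap (sylL A M)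

@[simp] lemma sylCLM_apply {n r : ℕ} (A : Matrix (Fin n) (Fin n) ℝ)
    (M : Matrix (Fin r) (Fin r) ℝ) (X : Matrix (Fin n) (Fin r) ℝ) :
    sylCLM A M X = A * X + X * Mᵀ := rfl

/-- Right multiplication by `ξᵀ` as a linear map. -/
def rmulL {n r : ℕ} (ξ : Matrix (Fin r) (Fin r) ℝ) :
    Matrix (Fin n) (Fin r) ℝ →ₗ[ℝ] Matrix (Fin n) (Fin r) ℝ where
  toFun X := X * ξᵀ
  map_add' X Y := by simp [Matrix.add_mul]
  map_smul' c X := by simp [Matrix.smul_mul]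

noncomputable def rmulCLM {n r : ℕ} :
    Matrix (Fin r) (Fin r) ℝ →L[ℝ]
      (Matrix (Fin n) (Fin r) ℝ →L[ℝ] Matrix (Fin n) (Fin r) ℝ) :=
  LinearMap.toContinuousLinearMap
  { toFun := fun ξ => LinearMap.toContinuousLinearMap (rmulL ξ)
    map_add' := fun ξ η => by
      ext X
      simp [rmulL, Matrix.mul_add, Matrix.transpose_add]
    map_smul' := fun c ξ => by
      ext X
      simp [rmulL, Matrix.transpose_smul, Matrix.mul_smul] }

@[simp] lemma rmulCLM_apply {n r : ℕ} (ξ : Matrix (Fin r) (Fin r) ℝ)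
    (X : Matrix (Fin n) (Fin r) ℝ) : rmulCLM ξ X = X * ξᵀ := rfl

end

set_option synthInstance.maxHeartbeats 1000000 in
set_option maxHeartbeats 2000000 in
/-- the solution map of the Sylvester equation
`A Φ(M) + Φ(M) Mᵀ + N = 0` on an open set `U` of stable matrices is Fréchet
differentiable at every `A_r ∈ U`, and its derivative in the direction `ξ` is
the unique solution `X'` of `A X' + X' A_rᵀ + Φ(A_r) ξᵀ = 0`. -/
theorem sylvester_solution_differentiable {n r : ℕ}
    (A : Matrix (Fin n) (Fin n) ℝ) (hA : IsStable A)
    (N : Matrix (Fin n) (Fin r) ℝ)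
    (U : Set (Matrix (Fin r) (Fin r) ℝ)) (hU : IsOpen U)
    (hUstable : ∀ M ∈ U, IsStable M)
    (Φ : Matrix (Fin r) (Fin r) ℝ → Matrix (Fin n) (Fin r) ℝ)
    (hΦ : ∀ M ∈ U, A * Φ M + Φ M * Mᵀ + N = 0) :
    ∀ A_r ∈ U,
      ∃ D : Matrix (Fin r) (Fin r) ℝ →L[ℝ] Matrix (Fin n) (Fin r) ℝ,
        HasFDerivAt Φ D A_r ∧
        ∀ ξ : Matrix (Fin r) (Fin r) ℝ,
          (A * D ξ + D ξ * A_rᵀ + Φ A_r * ξᵀ = 0) ∧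
          ∀ X' : Matrix (Fin n) (Fin r) ℝ,
            A * X' + X' * A_rᵀ + Φ A_r * ξᵀ = 0 → X' = D ξ := by
  intro A_r hAr
  letI : TopologicalSpace (Matrix (Fin n) (Fin r) ℝ) := sylMatTopology
  letI : TopologicalSpace (Matrix (Fin r) (Fin r) ℝ) := sylMatTopology
  -- units of the Sylvester operator on `U`
  have hbij : ∀ M ∈ U, Function.Bijective (sylL A M) := by
    intro M hM
    have hinj : Function.Injective (sylL A M) := by
      rw [injective_iff_map_eq_zero]
      intro X hX0
      exact sylvester_injective hA (hUstable M hM) X hX0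
    exact ⟨hinj, LinearMap.injective_iff_surjective.mp hinj⟩
  have hunit : ∀ M ∈ U, ∃ u : (Matrix (Fin n) (Fin r) ℝ →L[ℝ] Matrix (Fin n) (Fin r) ℝ)ˣ,
      (u : Matrix (Fin n) (Fin r) ℝ →L[ℝ] Matrix (Fin n) (Fin r) ℝ) = sylCLM A M := by
    intro M hM
    refine ⟨((LinearEquiv.ofBijective (sylL A M) (hbij M hM)).toContinuousLinearEquiv).toUnit,
      ?_⟩
    ext X
    rfl
  obtain ⟨u, hu⟩ := hunit A_r hAr
  -- the affine map `M ↦ sylCLM A M` and its derivative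
  have hT : HasFDerivAt (fun M => sylCLM A M) (rmulCLM (n := n) (r := r)) A_r := by
    have heq : (fun M => sylCLM A M) =
        fun M : Matrix (Fin r) (Fin r) ℝ => sylCLM A (0 : Matrix (Fin r) (Fin r) ℝ) + rmulCLM M := by
      funext M
      ext X
      simp
    rw [heq]
    exact ((rmulCLM (n := n) (r := r)).hasFDerivAt (x := A_r)).const_add (sylCLM A 0)
  -- the smooth solution map `f`
  set f : Matrix (Fin r) (Fin r) ℝ → Matrix (Fin n) (Fin r) ℝ :=
    fun M => (Ring.inverse (sylCLM A M)) (-N) with hf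
  have hDinv : HasFDerivAt (fun M => Ring.inverse (sylCLM A M))
      ((-(@ContinuousLinearMap.mulLeftRight ℝ _ (Matrix (Fin n) (Fin r) ℝ →L[ℝ] Matrix (Fin n) (Fin r) ℝ) _ _ (IsScalarTower.right (R := ℝ) (A := (Matrix (Fin n) (Fin r) ℝ →L[ℝ] Matrix (Fin n) (Fin r) ℝ))) (Algebra.to_smulCommClass (R := ℝ) (A := (Matrix (Fin n) (Fin r) ℝ →L[ℝ] Matrix (Fin n) (Fin r) ℝ))) (↑u⁻¹ : (Matrix (Fin n) (Fin r) ℝ →L[ℝ] Matrix (Fin n) (Fin r) ℝ)) (↑u⁻¹ : (Matrix (Fin n) (Fin r) ℝ →L[ℝ] Matrix (Fin n) (Fin r) ℝ)))).comp rmulCLM) A_r := by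
    have h1 := hasFDerivAt_ringInverse (𝕜 := ℝ) u
    rw [hu] at h1
    exact h1.comp A_r hT
  have hDf : HasFDerivAt f
      ((ContinuousLinearMap.apply ℝ (Matrix (Fin n) (Fin r) ℝ) (-N)).comp
        ((-(@ContinuousLinearMap.mulLeftRight ℝ _ (Matrix (Fin n) (Fin r) ℝ →L[ℝ] Matrix (Fin n) (Fin r) ℝ) _ _ (IsScalarTower.right (R := ℝ) (A := (Matrix (Fin n) (Fin r) ℝ →L[ℝ] Matrix (Fin n) (Fin r) ℝ))) (Algebra.to_smulCommClass (R := ℝ) (A := (Matrix (Fin n) (Fin r) ℝ →L[ℝ] Matrix (Fin n) (Fin r) ℝ))) (↑u⁻¹ : (Matrix (Fin n) (Fin r) ℝ →L[ℝ] Matrix (Fin n) (Fin r) ℝ)) (↑u⁻¹ : (Matrix (Fin n) (Fin r) ℝ →L[ℝ] Matrix (Fin n) (Fin r) ℝ)))).comp rmulCLM)) A_r :=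
    ((ContinuousLinearMap.apply ℝ (Matrix (Fin n) (Fin r) ℝ) (-N)).hasFDerivAt).comp A_r hDinv
  set D := ((ContinuousLinearMap.apply ℝ (Matrix (Fin n) (Fin r) ℝ) (-N)).comp
        ((-(@ContinuousLinearMap.mulLeftRight ℝ _ (Matrix (Fin n) (Fin r) ℝ →L[ℝ] Matrix (Fin n) (Fin r) ℝ) _ _ (IsScalarTower.right (R := ℝ) (A := (Matrix (Fin n) (Fin r) ℝ →L[ℝ] Matrix (Fin n) (Fin r) ℝ))) (Algebra.to_smulCommClass (R := ℝ) (A := (Matrix (Fin n) (Fin r) ℝ →L[ℝ] Matrix (Fin n) (Fin r) ℝ))) (↑u⁻¹ : (Matrix (Fin n) (Fin r) ℝ →L[ℝ] Matrix (Fin n) (Fin r) ℝ)) (↑u⁻¹ : (Matrix (Fin n) (Fin r) ℝ →L[ℝ] Matrix (Fin n) (Fin r) ℝ)))).comp rmulCLM)) with hD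
  -- `f` agrees with `Φ` on `U`
  have hkey : ∀ M ∈ U, f M = Φ M := by
    intro M hM
    obtain ⟨v, hv⟩ := hunit M hM
    have hsol : sylCLM A M (Φ M) = -N := by
      rw [sylCLM_apply]
      exact eq_neg_of_add_eq_zero_left (hΦ M hM)
    rw [hf]
    simp only [← hv, Ring.inverse_unit]
    rw [← hsol, ← hv, ← ContinuousLinearMap.mul_apply, Units.inv_mul,
      ContinuousLinearMap.one_apply]
  have hΦf : Φ =ᶠ[nhds A_r] f :=
    Filter.eventually_of_mem (hU.mem_nhds hAr) (fun M hM => (hkey M hM).symm)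
  have hΦD : HasFDerivAt Φ D A_r := hDf.congr_of_eventuallyEq hΦf
  refine ⟨D, hΦD, ?_⟩
  intro ξ
  have hfAr : (↑u⁻¹ : Matrix (Fin n) (Fin r) ℝ →L[ℝ] Matrix (Fin n) (Fin r) ℝ) (-N) = Φ A_r := by
    have h := hkey A_r hAr
    rw [show f A_r = (Ring.inverse (sylCLM A A_r)) (-N) from rfl, ← hu, Ring.inverse_unit] at h
    exact h
  have hDξ : D ξ = -((↑u⁻¹ : Matrix (Fin n) (Fin r) ℝ →L[ℝ] Matrix (Fin n) (Fin r) ℝ)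
      (Φ A_r * ξᵀ)) := by
    rw [hD]
    simp only [ContinuousLinearMap.comp_apply, ContinuousLinearMap.neg_apply,
      ContinuousLinearMap.mulLeftRight_apply, ContinuousLinearMap.apply_apply]
    simp only [ContinuousLinearMap.neg_apply, ContinuousLinearMap.mul_apply, hfAr,
      rmulCLM_apply]
  have heqn : A * D ξ + D ξ * A_rᵀ + Φ A_r * ξᵀ = 0 := by
    have h2 : sylCLM A A_r (D ξ) = -(Φ A_r * ξᵀ) := by
      rw [hDξ, ← hu, map_neg, ← ContinuousLinearMap.mul_apply, Units.mul_inv,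
        ContinuousLinearMap.one_apply]
    rw [sylCLM_apply] at h2
    rw [h2]
    abel
  refine ⟨heqn, ?_⟩
  intro X' hX'
  have h3 : sylCLM A A_r X' = sylCLM A A_r (D ξ) := by
    rw [sylCLM_apply, sylCLM_apply]
    have e1 : A * X' + X' * A_rᵀ = -(Φ A_r * ξᵀ) := eq_neg_of_add_eq_zero_left hX'
    have e2 : A * D ξ + D ξ * A_rᵀ = -(Φ A_r * ξᵀ) := eq_neg_of_add_eq_zero_left heqn
    rw [e1, e2]
  exact (hbij A_r hAr).1 h3
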